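/- arXiv:2512.24610 — 2 statements merged into one kernel-verified Lean document; each statement's English description precedes it below -/
import Mathlib

section
/- Let θ₁, θ₂, θ₃ ∈ (0, π) with θ₁ + θ₂ + θ₃ = 2π, and let σ₁₂, σ₁₃, σ₂₃ > 0 satisfy Young's law sin θ₁/σ₂₃ = sin θ₂/σ₁₃ = sin θ₃/σ₁₂. If α₂ − α₁ ∈ (π − θ₁, θ₃) and sin θ₁ · cos(α₂ − α₁ − (π − θ₁)) + sin θ₂ · cos(π − θ₁) ≤ sin θ₃, then a contradiction follows. -/
open Real

/-- Young's law junction angles: if `θ₁, θ₂, θ₃ ∈ (0,π)` with `θ₁+θ₂+θ₃ = 2π`,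
`σ₁₂, σ₁₃, σ₂₃ > 0` satisfy `sin θ₁/σ₂₃ = sin θ₂/σ₁₃ = sin θ₃/σ₁₂`,
`α₂ − α₁ ∈ (π − θ₁, θ₃)` and
`sin θ₁ · cos(α₂ − α₁ − (π − θ₁)) + sin θ₂ · cos(π − θ₁) ≤ sin θ₃`,
then a contradiction follows. -/
theorem stmt_3 (θ₁ θ₂ θ₃ σ₁₂ σ₁₃ σ₂₃ α₁ α₂ : ℝ)
    (hθ₁ : θ₁ ∈ Set.Ioo 0 Real.pi) (hθ₂ : θ₂ ∈ Set.Ioo 0 Real.pi)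
    (hθ₃ : θ₃ ∈ Set.Ioo 0 Real.pi)
    (hsum : θ₁ + θ₂ + θ₃ = 2 * Real.pi)
    (h12 : 0 < σ₁₂) (h13 : 0 < σ₁₃) (h23 : 0 < σ₂₃)
    (hyoung1 : Real.sin θ₁ / σ₂₃ = Real.sin θ₂ / σ₁₃)
    (hyoung2 : Real.sin θ₂ / σ₁₃ = Real.sin θ₃ / σ₁₂)
    (hα : α₂ - α₁ ∈ Set.Ioo (Real.pi - θ₁) θ₃)
    (hstab : Real.sin θ₁ * Real.cos (α₂ - α₁ - (Real.pi - θ₁))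
        + Real.sin θ₂ * Real.cos (Real.pi - θ₁) ≤ Real.sin θ₃) : False := by
  have hs1 : 0 < Real.sin θ₁ := Real.sin_pos_of_pos_of_lt_pi hθ₁.1 hθ₁.2
  set x := α₂ - α₁ - (Real.pi - θ₁) with hx
  have hx0 : 0 ≤ x := by have := hα.1; simp only [hx]; linarith
  have hxlt : x < Real.pi - θ₂ := by have := hα.2; simp only [hx]; linarith
  have hle : Real.pi - θ₂ ≤ Real.pi := by have := hθ₂.1; linarith
  have hcos : Real.cos (Real.pi - θ₂) < Real.cos x :=
    Real.cos_lt_cos_of_nonneg_of_le_pi hx0 hle hxlt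
  have hsin3 : Real.sin θ₃ = Real.sin θ₁ * Real.cos (Real.pi - θ₂)
      + Real.sin θ₂ * Real.cos (Real.pi - θ₁) := by
    have h3 : θ₃ = 2 * Real.pi - (θ₁ + θ₂) := by linarith
    rw [h3, Real.sin_sub, Real.sin_two_pi, Real.cos_two_pi, Real.sin_add,
      Real.cos_pi_sub, Real.cos_pi_sub]
    ring
  nlinarith [mul_lt_mul_of_pos_left hcos hs1]
end

section
/- Let u : ℝ²₊ → ℝ² be a C² solution of Δu = ∇W(u). Then for every r > 0, ∫_{B_r⁺} ∂_j(z_i T_ij) dz = −2 ∫_{B_r⁺} W(u) dz, where T_ij = ∂_i u · ∂_j u − δ_ij (½|∇u|² + W(u)) and summation over repeated indices i, j ∈ {1,2} is understood. -/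
open Real InnerProductSpace MeasureTheory

noncomputable section

/-- The upper half-plane `ℝ²₊`. -/
def upperHalfPlane2 : Set (EuclideanSpace ℝ (Fin 2)) := {z | 0 < z 1}

/-- The open upper half-disk of radius `r` centered at the origin. -/
def upperHalfDisk (r : ℝ) : Set (EuclideanSpace ℝ (Fin 2)) :=
  {z | ‖z‖ < r ∧ 0 < z 1}

/-- Partial derivative `∂ᵢ u` of a map `u : ℝ² → ℝ²`. -/
def pderiv2 (u : EuclideanSpace ℝ (Fin 2) → EuclideanSpace ℝ (Fin 2)) (i : Fin 2)
    (w : EuclideanSpace ℝ (Fin 2)) : EuclideanSpace ℝ (Fin 2) :=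
  fderiv ℝ u w (EuclideanSpace.single i 1)

/-- The stress-energy tensor
`T_ij = ∂_i u · ∂_j u − δ_ij (½|∇u|² + W(u))`. -/
def stressTensor (W : EuclideanSpace ℝ (Fin 2) → ℝ)
    (u : EuclideanSpace ℝ (Fin 2) → EuclideanSpace ℝ (Fin 2)) (i j : Fin 2)
    (w : EuclideanSpace ℝ (Fin 2)) : ℝ :=
  ⟪pderiv2 u i w, pderiv2 u j w⟫_ℝ -
    (if i = j then (1:ℝ) else 0) *
      ((1 / 2) * ∑ k : Fin 2, ‖pderiv2 u k w‖ ^ 2 + W (u w))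

abbrev E2 := EuclideanSpace ℝ (Fin 2)

theorem pointwise (W : E2 → ℝ) (gradW : E2 → E2)
    (hgradW : ∀ p, HasGradientAt W (gradW p) p)
    (u : E2 → E2) (hu : ContDiffOn ℝ 2 u upperHalfPlane2)
    (heq : ∀ z ∈ upperHalfPlane2,
      (∑ i : Fin 2, fderiv ℝ (pderiv2 u i) z (EuclideanSpace.single i 1)) = gradW (u z))
    (z : E2) (hz : z ∈ upperHalfPlane2) :
    (∑ i : Fin 2, ∑ j : Fin 2,
      fderiv ℝ (fun w => w i * stressTensor W u i j w) z (EuclideanSpace.single j 1))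
      = -2 * W (u z) := by
  have hopen : IsOpen upperHalfPlane2 := isOpen_lt continuous_const (PiLp.continuous_apply 2 _ 1)
  have hzmem : upperHalfPlane2 ∈ nhds z := hopen.mem_nhds hz
  have hcu : ContDiffAt ℝ 2 u z := hu.contDiffAt hzmem
  have hdu : DifferentiableAt ℝ u z := hcu.differentiableAt (by norm_num)
  have hcf : ContDiffAt ℝ 1 (fderiv ℝ u) z := hcu.fderiv_right (le_refl 2)
  have hdf : DifferentiableAt ℝ (fderiv ℝ u) z := hcf.differentiableAt (by norm_num)
  set e : Fin 2 → E2 := fun i => EuclideanSpace.single i 1 with he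
  set f'' := fderiv ℝ (fderiv ℝ u) z with hf''
  have hsymm : ∀ v w, f'' v w = f'' w v := hcu.isSymmSndFDerivAt (by simp [minSmoothness_of_isRCLikeNormedField])
  set P : Fin 2 → (E2 →L[ℝ] E2) := fun i => (ContinuousLinearMap.apply ℝ E2 (e i)).comp f'' with hP
  have hp : ∀ i, HasFDerivAt (pderiv2 u i) (P i) z := fun i =>
    (ContinuousLinearMap.apply ℝ E2 (e i)).hasFDerivAt.comp z hdf.hasFDerivAt
  set q : Fin 2 → E2 := fun i => pderiv2 u i z with hq
  -- inner products
  set G : Fin 2 → Fin 2 → (E2 →L[ℝ] ℝ) := fun i j =>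
    (fderivInnerCLM ℝ (q i, q j)).comp ((P i).prod (P j)) with hG
  have hg : ∀ i j, HasFDerivAt (fun w => ⟪pderiv2 u i w, pderiv2 u j w⟫_ℝ) (G i j) z :=
    fun i j => (hp i).inner ℝ (hp j)
  -- W ∘ u
  set gW : E2 := gradW (u z) with hgW
  have hWu : HasFDerivAt (fun w => W (u w)) ((toDual ℝ E2 gW).comp (fderiv ℝ u z)) z :=
    (hgradW (u z)).hasFDerivAt.comp z hdu.hasFDerivAt
  -- sum of squared norms
  have hnorm_eq : (fun w => (1/2 : ℝ) * ∑ k : Fin 2, ‖pderiv2 u k w‖ ^ 2 + W (u w))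
      = fun w => (1/2 : ℝ) * ∑ k : Fin 2, ⟪pderiv2 u k w, pderiv2 u k w⟫_ℝ + W (u w) := by
    funext w; simp only [real_inner_self_eq_norm_sq]
  set R : E2 →L[ℝ] ℝ := (1/2 : ℝ) • (∑ k : Fin 2, G k k) + (toDual ℝ E2 gW).comp (fderiv ℝ u z)
    with hR
  have hRd : HasFDerivAt (fun w => (1/2 : ℝ) * ∑ k : Fin 2, ‖pderiv2 u k w‖ ^ 2 + W (u w)) R z := by
    rw [hnorm_eq]
    exact ((HasFDerivAt.fun_sum (fun k _ => hg k k)).const_mul ((1:ℝ)/2)).fun_add hWu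
  -- stress tensor
  set T : Fin 2 → Fin 2 → (E2 →L[ℝ] ℝ) := fun i j =>
    G i j - (if i = j then (1:ℝ) else 0) • R with hT
  have ht : ∀ i j, HasFDerivAt (stressTensor W u i j) (T i j) z := fun i j =>
    (hg i j).sub (hRd.const_mul _)
  -- product
  have hprod : ∀ i j, HasFDerivAt (fun w : E2 => w i * stressTensor W u i j w)
      (z i • T i j + stressTensor W u i j z • (EuclideanSpace.proj i : E2 →L[ℝ] ℝ)) z :=
    fun i j => HasFDerivAt.mul ((EuclideanSpace.proj i : E2 →L[ℝ] ℝ).hasFDerivAt) (ht i j)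
  have hfd : ∀ i j, fderiv ℝ (fun w : E2 => w i * stressTensor W u i j w) z
      = z i • T i j + stressTensor W u i j z • (EuclideanSpace.proj i : E2 →L[ℝ] ℝ) :=
    fun i j => (hprod i j).fderiv
  have hheq : f'' (e 0) (e 0) + f'' (e 1) (e 1) = gW := by
    have h := heq z hz
    rw [Fin.sum_univ_two, (hp 0).fderiv, (hp 1).fderiv] at h
    simpa [hP] using h
  rw [Fin.sum_univ_two, Fin.sum_univ_two, Fin.sum_univ_two,
    hfd 0 0, hfd 0 1, hfd 1 0, hfd 1 1]
  simp only [ContinuousLinearMap.add_apply, ContinuousLinearMap.coe_smul', Pi.smul_apply,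
    ContinuousLinearMap.coe_sub', Pi.sub_apply, ContinuousLinearMap.coe_comp', Function.comp_apply,
    ContinuousLinearMap.prod_apply, fderivInnerCLM_apply, ContinuousLinearMap.apply_apply,
    smul_eq_mul, hT, hG, hR, hP, ContinuousLinearMap.coe_sum', Finset.sum_apply,
    Fin.sum_univ_two, PiLp.proj_apply, EuclideanSpace.single_apply, toDual_apply_apply,
    stressTensor]
  have hq' : ∀ i, pderiv2 u i z = q i := fun _ => rfl
  have hFq : ∀ i, fderiv ℝ u z (EuclideanSpace.single i 1) = q i := fun _ => rfl
  simp only [he, hq', hFq, Fin.isValue, Fin.reduceEq, reduceIte, if_true, if_false, one_mul,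
    mul_one, mul_zero, zero_mul, sub_zero, add_zero, zero_add]
  have s : f'' (EuclideanSpace.single 0 1) (EuclideanSpace.single 1 1)
      = f'' (EuclideanSpace.single 1 1) (EuclideanSpace.single 0 1) := hsymm _ _
  have n0 : ‖q 0‖^2 = ⟪q 0, q 0⟫_ℝ := (real_inner_self_eq_norm_sq _).symm
  have n1 : ‖q 1‖^2 = ⟪q 1, q 1⟫_ℝ := (real_inner_self_eq_norm_sq _).symm
  have hh : ∀ k, f'' (EuclideanSpace.single 0 1) (EuclideanSpace.single 0 1) k
      + f'' (EuclideanSpace.single 1 1) (EuclideanSpace.single 1 1) k = gW k := by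
    intro k; rw [← hheq]; rfl
  rw [s, n0, n1]
  simp only [PiLp.inner_apply, RCLike.inner_apply, conj_trivial, Fin.sum_univ_two]
  linear_combination (z 0 * q 0 0) * hh 0 + (z 0 * q 0 1) * hh 1
    + (z 1 * q 1 0) * hh 0 + (z 1 * q 1 1) * hh 1

/-- Pohozaev identity: for a `C²` solution `u` of `Δu = ∇W(u)` on the upper
half-plane and every `r > 0`,
`∫_{B_r⁺} ∂_j(z_i T_ij) dz = −2 ∫_{B_r⁺} W(u) dz` (summation over `i, j`). -/
theorem stmt_7 (W : EuclideanSpace ℝ (Fin 2) → ℝ)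
    (gradW : EuclideanSpace ℝ (Fin 2) → EuclideanSpace ℝ (Fin 2))
    (hW : ContDiff ℝ 1 W) (hgradW : ∀ p, HasGradientAt W (gradW p) p)
    (u : EuclideanSpace ℝ (Fin 2) → EuclideanSpace ℝ (Fin 2))
    (hu : ContDiffOn ℝ 2 u upperHalfPlane2)
    (heq : ∀ z ∈ upperHalfPlane2,
      (∑ i : Fin 2, fderiv ℝ (pderiv2 u i) z (EuclideanSpace.single i 1)) =
        gradW (u z))
    (r : ℝ) (hr : 0 < r) :
    ∫ z in upperHalfDisk r,
        (∑ i : Fin 2, ∑ j : Fin 2,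
          fderiv ℝ (fun w => w i * stressTensor W u i j w) z
            (EuclideanSpace.single j 1)) =
      -2 * ∫ z in upperHalfDisk r, W (u z) := by
  have hmeas : MeasurableSet (upperHalfDisk r) := by
    have : IsOpen (upperHalfDisk r) :=
      (isOpen_lt continuous_norm continuous_const).inter
        (isOpen_lt continuous_const (PiLp.continuous_apply 2 _ 1))
    exact this.measurableSet
  rw [setIntegral_congr_fun hmeas (g := fun z => -2 * W (u z))
      (fun z hz => pointwise W gradW hgradW u hu heq z hz.2),
    integral_const_mul]

end
end
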